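/- Let f(s) = H⁻¹(√2|s|) where H(t) = ∫_1^t (log x)^{-1/2} dx. Then f(s)/(√2 |s| (log|s|)^{1/2}) → 1 as |s| → ∞. -/

import Mathlib

open Real Set Filter

/-- `H t = ∫_1^t (log x)^{-1/2} dx`. -/
noncomputable def Hfun (t : ℝ) : ℝ := ∫ x in (1:ℝ)..t, (Real.log x) ^ (-(1:ℝ)/2)


noncomputable def gl (x : ℝ) : ℝ := (Real.log x) ^ (-(1:ℝ)/2)

lemma gl_nonneg {x : ℝ} (hx : 1 ≤ x) : 0 ≤ gl x :=
  Real.rpow_nonneg (Real.log_nonneg hx) _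

lemma log_ge {x M : ℝ} (h1 : 1 < x) (h2 : x ≤ M) : (x - 1)/M ≤ Real.log x := by
  have hx : 0 < x := lt_trans one_pos h1
  have h := Real.log_le_sub_one_of_pos (x := 1/x) (by positivity)
  rw [Real.log_div one_ne_zero (ne_of_gt hx), Real.log_one] at h
  have h' : (x - 1)/x ≤ Real.log x := by
    rw [div_le_iff₀ hx]
    have hh : (1/x - 1) * x = 1 - x := by field_simp
    nlinarith
  refine le_trans ?_ h'
  apply div_le_div_of_nonneg_left (by linarith) hx h2

lemma gl_integrable {a b : ℝ} (ha : 1 ≤ a) (hb : 1 ≤ b) :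
    IntervalIntegrable gl MeasureTheory.volume a b := by
  set M := max a b with hM
  have hM1 : 1 ≤ M := le_trans ha (le_max_left _ _)
  have hmeas : MeasureTheory.AEStronglyMeasurable gl
      (MeasureTheory.volume.restrict (Set.uIoc a b)) :=
    (Real.measurable_log.pow_const _).aestronglyMeasurable
  -- dominating function
  have hg : IntervalIntegrable (fun x => Real.sqrt M * ((x - 1) ^ (-(1:ℝ)/2))) MeasureTheory.volume a b := by
    have h0 : IntervalIntegrable (fun x : ℝ => x ^ (-(1:ℝ)/2)) MeasureTheory.volume (a-1) (b-1) :=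
      intervalIntegral.intervalIntegrable_rpow' (by norm_num)
    have h1 := (h0.comp_sub_right 1).const_mul (Real.sqrt M)
    simpa using h1
  apply hg.mono_fun hmeas
  filter_upwards [MeasureTheory.ae_restrict_mem measurableSet_uIoc] with x hx
  have hmin : 1 ≤ min a b := le_min ha hb
  have hx1 : 1 < x := lt_of_le_of_lt hmin hx.1
  have hxM : x ≤ M := hx.2
  have hlog : (x - 1)/M ≤ Real.log x := log_ge hx1 hxM
  have hpos : 0 < (x - 1)/M := by
    apply div_pos (by linarith) (by linarith)
  have key : gl x ≤ ((x - 1)/M) ^ (-(1:ℝ)/2) :=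
    Real.rpow_le_rpow_of_nonpos hpos hlog (by norm_num)
  have hrw : ((x - 1)/M) ^ (-(1:ℝ)/2) = Real.sqrt M * ((x - 1) ^ (-(1:ℝ)/2)) := by
    rw [Real.div_rpow (by linarith) (by linarith)]
    rw [Real.sqrt_eq_rpow, div_eq_mul_inv, ← Real.rpow_neg (by linarith : (0:ℝ) ≤ M)]
    ring_nf
  rw [Real.norm_eq_abs, Real.norm_eq_abs, abs_of_nonneg (gl_nonneg hx1.le),
    abs_of_nonneg (mul_nonneg (Real.sqrt_nonneg _) (Real.rpow_nonneg (by linarith) _))]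
  rw [← hrw]; exact key




lemma Hfun_eq (t : ℝ) : Hfun t = ∫ x in (1:ℝ)..t, gl x := rfl

lemma gl_anti {x y : ℝ} (hx : 1 < x) (hxy : x ≤ y) : gl y ≤ gl x :=
  Real.rpow_le_rpow_of_nonpos (Real.log_pos hx) (Real.log_le_log (by linarith) hxy) (by norm_num)

lemma Hfun_add {a b : ℝ} (ha : 1 ≤ a) (hb : 1 ≤ b) :
    Hfun b = Hfun a + ∫ x in a..b, gl x := by
  rw [Hfun_eq, Hfun_eq,
    intervalIntegral.integral_add_adjacent_intervals (gl_integrable le_rfl ha) (gl_integrable ha hb)]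

lemma Hfun_nonneg {t : ℝ} (ht : 1 ≤ t) : 0 ≤ Hfun t := by
  rw [Hfun_eq]
  exact intervalIntegral.integral_nonneg ht fun u hu => gl_nonneg hu.1

lemma Hfun_strictMono {a b : ℝ} (ha : 1 ≤ a) (hab : a < b) : Hfun a < Hfun b := by
  rw [Hfun_add ha (by linarith : (1:ℝ) ≤ b)]
  have : 0 < ∫ x in a..b, gl x := by
    apply intervalIntegral.intervalIntegral_pos_of_pos_on
      (gl_integrable ha (by linarith)) _ hab
    intro x hx
    exact Real.rpow_pos_of_pos (Real.log_pos (lt_of_le_of_lt ha hx.1)) _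
  linarith

lemma int_le_const {a b : ℝ} (ha : 1 < a) (hab : a ≤ b) :
    ∫ x in a..b, gl x ≤ (b - a) * gl a := by
  have h := intervalIntegral.integral_mono_on hab
    (gl_integrable ha.le (by linarith)) (intervalIntegrable_const (c := gl a))
    (fun x hx => gl_anti ha hx.1)
  simpa [smul_eq_mul, mul_comm] using h

lemma int_ge_const {a b : ℝ} (ha : 1 < a) (hab : a ≤ b) :
    (b - a) * gl b ≤ ∫ x in a..b, gl x := by
  have h := intervalIntegral.integral_mono_on hab
    (intervalIntegrable_const (c := gl b)) (gl_integrable ha.le (by linarith))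
    (fun x hx => gl_anti (lt_of_lt_of_le ha hx.1) hx.2)
  simpa [smul_eq_mul, mul_comm] using h

lemma Hfun_upper {u : ℝ} (hu : Real.exp 1 ≤ u) : Hfun u ≤ Hfun (Real.exp 1) + u := by
  have he : (1:ℝ) < Real.exp 1 := by
    have := Real.exp_one_gt_d9; linarith
  rw [Hfun_add he.le (le_trans he.le hu)]
  have h1 : ∫ x in (Real.exp 1)..u, gl x ≤ (u - Real.exp 1) * gl (Real.exp 1) :=
    int_le_const he hu
  have h2 : gl (Real.exp 1) = 1 := by
    rw [gl, Real.log_exp, Real.one_rpow]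
  rw [h2] at h1
  have : Real.exp 1 > 0 := Real.exp_pos 1
  linarith




lemma gl_mul_sqrt {t : ℝ} (ht : 0 < Real.log t) : gl t * Real.sqrt (Real.log t) = 1 := by
  rw [gl, Real.sqrt_eq_rpow, ← Real.rpow_add ht]
  norm_num

lemma Hfun_tendsto : Tendsto (fun t => Hfun t * Real.sqrt (Real.log t) / t) atTop (nhds 1) := by
  rw [tendsto_order]
  have he1 : (1:ℝ) < Real.exp 1 := by have := Real.exp_one_gt_d9; linarith
  constructor
  · -- lower bound
    intro c hc
    have hlb : ∀ᶠ t in atTop, 1 - Real.sqrt t / t ≤ Hfun t * Real.sqrt (Real.log t) / t := by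
      filter_upwards [eventually_ge_atTop (Real.exp 2)] with t ht
      have he2 : (1:ℝ) < Real.exp 2 := by
        have h12 : Real.exp 1 ≤ Real.exp 2 := Real.exp_le_exp.2 one_le_two
        linarith
      have ht1 : 1 < t := lt_of_lt_of_le he2 ht
      have ht0 : (0:ℝ) < t := by linarith
      have hst : 1 < Real.sqrt t := by
        rw [show (1:ℝ) = Real.sqrt 1 by simp]
        exact Real.sqrt_lt_sqrt (by norm_num) ht1
      have hsle : Real.sqrt t ≤ t := (Real.sqrt_le_left ht0.le).2 (by nlinarith)
      have hlt : 0 < Real.log t := Real.log_pos ht1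
      have h1 : (t - Real.sqrt t) * gl t ≤ Hfun t := by
        have := int_ge_const hst hsle
        have h0 : 0 ≤ Hfun (Real.sqrt t) := Hfun_nonneg hst.le
        rw [Hfun_add hst.le (by linarith : (1:ℝ) ≤ t)]
        linarith
      have h2 : (t - Real.sqrt t) * (gl t * Real.sqrt (Real.log t)) ≤ Hfun t * Real.sqrt (Real.log t) := by
        rw [← mul_assoc]
        exact mul_le_mul_of_nonneg_right h1 (Real.sqrt_nonneg _)
      rw [gl_mul_sqrt hlt, mul_one] at h2
      rw [show (1:ℝ) - Real.sqrt t / t = (t - Real.sqrt t) / t by field_simp]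
      gcongr
    have hten : Tendsto (fun t : ℝ => 1 - Real.sqrt t / t) atTop (nhds 1) := by
      have h0 : Tendsto (fun t : ℝ => Real.sqrt t / t) atTop (nhds 0) := by
        apply Tendsto.congr' _ (tendsto_rpow_neg_atTop (y := 1/2) (by norm_num))
        filter_upwards [eventually_gt_atTop (0:ℝ)] with t ht
        rw [Real.sqrt_eq_rpow, eq_div_iff (ne_of_gt ht)]
        nth_rewrite 2 [← Real.rpow_one t]
        rw [← Real.rpow_add ht]; norm_num
      simpa using tendsto_const_nhds.sub h0
    filter_upwards [hlb, hten.eventually (eventually_gt_nhds hc)] with t h1 h2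
    exact lt_of_lt_of_le h2 h1
  · -- upper bound
    intro c hc
    set m : ℝ := (1 + c)/2 with hm
    have hm1 : 1 < m := by rw [hm]; linarith
    have hmc : m < c := by rw [hm]; linarith
    set θ : ℝ := m ^ (-2 : ℝ) with hθ
    have hθ0 : 0 < θ := Real.rpow_pos_of_pos (by linarith) _
    have hθ1 : θ < 1 := Real.rpow_lt_one_of_one_lt_of_neg hm1 (by norm_num)
    set K : ℝ := Hfun (Real.exp 1) with hK
    have hK0 : 0 ≤ K := Hfun_nonneg he1.le
    -- error term tends to 0
    have hE : Tendsto (fun t : ℝ => 2 * (Real.log t / t ^ ((1:ℝ) - θ))) atTop (nhds 0) := by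
      have := (isLittleO_log_rpow_atTop (by linarith : (0:ℝ) < 1 - θ)).tendsto_div_nhds_zero
      simpa using this.const_mul 2
    have hEbound : ∀ᶠ t in atTop,
        (K + t ^ θ) * Real.sqrt (Real.log t) / t ≤ 2 * (Real.log t / t ^ ((1:ℝ) - θ)) := by
      filter_upwards [eventually_ge_atTop (Real.exp 1),
        (tendsto_rpow_atTop hθ0).eventually_ge_atTop K,
        eventually_ge_atTop (Real.exp 1)] with t h1 h2 _
      have ht1 : 1 < t := lt_of_lt_of_le he1 h1
      have ht0 : (0:ℝ) < t := by linarith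
      have hlt1 : 1 ≤ Real.log t := by
        rw [Real.le_log_iff_exp_le ht0]; simpa using h1
      have hs : Real.sqrt (Real.log t) ≤ Real.log t :=
        (Real.sqrt_le_left (by linarith)).2 (by nlinarith)
      have htθ : (0:ℝ) < t ^ θ := Real.rpow_pos_of_pos ht0 _
      have key : (K + t ^ θ) * Real.sqrt (Real.log t) ≤ 2 * t ^ θ * Real.log t := by
        have : K + t ^ θ ≤ 2 * t ^ θ := by linarith
        calc (K + t ^ θ) * Real.sqrt (Real.log t) ≤ (2 * t ^ θ) * Real.log t := by
              apply mul_le_mul this hs (Real.sqrt_nonneg _) (by linarith)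
          _ = 2 * t ^ θ * Real.log t := by ring
      rw [div_le_iff₀ ht0]
      calc (K + t ^ θ) * Real.sqrt (Real.log t) ≤ 2 * t ^ θ * Real.log t := key
        _ = 2 * (Real.log t / t ^ ((1:ℝ) - θ)) * t := by
            have hpow : t ^ θ * t ^ ((1:ℝ) - θ) = t := by
              rw [← Real.rpow_add ht0]; norm_num
            have hne : t ^ ((1:ℝ) - θ) ≠ 0 := ne_of_gt (Real.rpow_pos_of_pos ht0 _)
            field_simp
            linear_combination hpow
    -- ratio bound
    have hub : ∀ᶠ t in atTop,
        Hfun t * Real.sqrt (Real.log t) / t ≤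
          (K + t ^ θ) * Real.sqrt (Real.log t) / t + m := by
      filter_upwards [(tendsto_rpow_atTop hθ0).eventually_ge_atTop (Real.exp 1),
        eventually_ge_atTop (Real.exp 1)] with t h1 h2
      have ht1 : 1 < t := lt_of_lt_of_le he1 h2
      have ht0 : (0:ℝ) < t := by linarith
      have htθ1 : 1 < t ^ θ := lt_of_lt_of_le he1 h1
      have htθt : t ^ θ ≤ t := by
        nth_rewrite 2 [show t = t ^ (1:ℝ) by simp]
        exact Real.rpow_le_rpow_of_exponent_le ht1.le hθ1.le
      have hlt : 0 < Real.log t := Real.log_pos ht1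
      -- Hfun t ≤ K + t^θ + (t - t^θ) * gl (t^θ)
      have hH : Hfun t ≤ K + t ^ θ + (t - t ^ θ) * gl (t ^ θ) := by
        rw [Hfun_add (le_of_lt htθ1) (by linarith : (1:ℝ) ≤ t)]
        have hu := Hfun_upper h1
        have hi := int_le_const htθ1 htθt
        linarith
      -- gl (t^θ) * sqrt (log t) = θ^(-1/2)= m  ... times stuff
      have hgl : gl (t ^ θ) * Real.sqrt (Real.log t) = m := by
        rw [gl, Real.log_rpow ht0, Real.mul_rpow hθ0.le hlt.le,
          Real.sqrt_eq_rpow, mul_assoc, ← Real.rpow_add hlt]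
        norm_num
        rw [← Real.rpow_mul (by linarith : (0:ℝ) ≤ m)]
        norm_num
      have hfinal : Hfun t * Real.sqrt (Real.log t) ≤
          (K + t ^ θ) * Real.sqrt (Real.log t) + m * t := by
        have h3 : (t - t ^ θ) * (gl (t ^ θ) * Real.sqrt (Real.log t)) ≤ m * t := by
          rw [hgl]
          have : t - t ^ θ ≤ t := by nlinarith
          nlinarith
        have h4 : Hfun t * Real.sqrt (Real.log t) ≤
            (K + t ^ θ + (t - t ^ θ) * gl (t ^ θ)) * Real.sqrt (Real.log t) :=
          mul_le_mul_of_nonneg_right hH (Real.sqrt_nonneg _)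
        calc Hfun t * Real.sqrt (Real.log t)
            ≤ (K + t ^ θ + (t - t ^ θ) * gl (t ^ θ)) * Real.sqrt (Real.log t) := h4
          _ = (K + t ^ θ) * Real.sqrt (Real.log t)
              + (t - t ^ θ) * (gl (t ^ θ) * Real.sqrt (Real.log t)) := by ring
          _ ≤ (K + t ^ θ) * Real.sqrt (Real.log t) + m * t := by linarith
      rw [div_add' _ _ _ (ne_of_gt ht0)]
      gcongr
    -- conclude
    have h5 : ∀ᶠ t in atTop, (K + t ^ θ) * Real.sqrt (Real.log t) / t + m < c := by
      have : Tendsto (fun t : ℝ => (K + t ^ θ) * Real.sqrt (Real.log t) / t + m) atTop (nhds (0 + m)) := by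
        apply Tendsto.add _ tendsto_const_nhds
        apply tendsto_of_tendsto_of_tendsto_of_le_of_le' tendsto_const_nhds hE _ hEbound
        filter_upwards [eventually_ge_atTop (Real.exp 1),
          (tendsto_rpow_atTop hθ0).eventually_ge_atTop 0] with t h1 h2
        have ht1 : 1 < t := lt_of_lt_of_le he1 h1
        positivity
      rw [zero_add] at this
      exact this.eventually (eventually_lt_nhds hmc)
    filter_upwards [hub, h5] with t h1 h2
    exact lt_of_le_of_lt h1 h2




lemma v_tendsto {γ : ℝ} (hγ : 0 < γ) :
    Tendsto (fun r : ℝ => γ * (Real.sqrt 2 * r * Real.sqrt (Real.log r))) atTop atTop := by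
  apply tendsto_atTop_mono' _ _ tendsto_id
  filter_upwards [eventually_ge_atTop (max 1 (Real.exp ((1/(γ * Real.sqrt 2))^2)))] with r hr
  have h1 : (1:ℝ) ≤ r := le_trans (le_max_left _ _) hr
  have h2 : Real.exp ((1/(γ * Real.sqrt 2))^2) ≤ r := le_trans (le_max_right _ _) hr
  have hs2 : (0:ℝ) < Real.sqrt 2 := Real.sqrt_pos.2 (by norm_num)
  have hr0 : (0:ℝ) < r := by linarith
  have hlog : (1/(γ * Real.sqrt 2))^2 ≤ Real.log r := by
    rw [Real.le_log_iff_exp_le hr0]; exact h2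
  have hsl : 1/(γ * Real.sqrt 2) ≤ Real.sqrt (Real.log r) := by
    have : Real.sqrt ((1/(γ * Real.sqrt 2))^2) ≤ Real.sqrt (Real.log r) :=
      Real.sqrt_le_sqrt hlog
    rwa [Real.sqrt_sq (by positivity)] at this
  have h3 : 1 ≤ γ * Real.sqrt 2 * Real.sqrt (Real.log r) := by
    have h4 := mul_le_mul_of_nonneg_left hsl (le_of_lt (mul_pos hγ hs2))
    rw [mul_one_div, div_self (by positivity)] at h4
    linarith [h4]
  have h5 := mul_le_mul_of_nonneg_left h3 hr0.le
  simp only [id]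
  calc r = r * 1 := (mul_one r).symm
    _ ≤ r * (γ * Real.sqrt 2 * Real.sqrt (Real.log r)) := h5
    _ = γ * (Real.sqrt 2 * r * Real.sqrt (Real.log r)) := by ring

lemma loglog_div_log : Tendsto (fun r : ℝ => Real.log (Real.log r) / Real.log r) atTop (nhds 0) := by
  have h := (Real.isLittleO_log_id_atTop.comp_tendsto Real.tendsto_log_atTop).tendsto_div_nhds_zero
  simpa [Function.comp] using h

lemma logv_div_log {γ : ℝ} (hγ : 0 < γ) :
    Tendsto (fun r : ℝ => Real.log (γ * (Real.sqrt 2 * r * Real.sqrt (Real.log r))) / Real.log r)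
      atTop (nhds 1) := by
  have hs2 : (0:ℝ) < Real.sqrt 2 := Real.sqrt_pos.2 (by norm_num)
  have hT : Tendsto (fun r : ℝ =>
      (Real.log γ + Real.log (Real.sqrt 2)) / Real.log r + 1
        + (1/2) * (Real.log (Real.log r) / Real.log r)) atTop (nhds (0 + 1 + (1/2) * 0)) := by
    refine Tendsto.add (Tendsto.add ?_ tendsto_const_nhds) (loglog_div_log.const_mul _)
    exact Tendsto.div_atTop tendsto_const_nhds Real.tendsto_log_atTop
  norm_num at hT
  apply hT.congr'
  filter_upwards [eventually_ge_atTop (Real.exp 1)] with r hr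
  have he1 : (1:ℝ) < Real.exp 1 := by have := Real.exp_one_gt_d9; linarith
  have hr1 : 1 < r := lt_of_lt_of_le he1 hr
  have hr0 : (0:ℝ) < r := by linarith
  have hlr : (1:ℝ) ≤ Real.log r := by rw [Real.le_log_iff_exp_le hr0]; simpa using hr
  have hlr0 : (0:ℝ) < Real.log r := by linarith
  have hslr : (0:ℝ) < Real.sqrt (Real.log r) := Real.sqrt_pos.2 hlr0
  have hexp : Real.log (γ * (Real.sqrt 2 * r * Real.sqrt (Real.log r)))
      = Real.log γ + Real.log (Real.sqrt 2) + Real.log r + Real.log (Real.log r) / 2 := by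
    rw [Real.log_mul (ne_of_gt hγ) (by positivity),
      Real.log_mul (by positivity) (ne_of_gt hslr),
      Real.log_mul (ne_of_gt hs2) (ne_of_gt hr0),
      Real.log_sqrt hlr0.le]
    ring
  rw [hexp]
  field_simp
lemma HfunD {γ : ℝ} (hγ : 0 < γ) :
    Tendsto (fun r : ℝ =>
      Hfun (γ * (Real.sqrt 2 * r * Real.sqrt (Real.log r))) / (Real.sqrt 2 * r))
      atTop (nhds γ) := by
  set v : ℝ → ℝ := fun r => γ * (Real.sqrt 2 * r * Real.sqrt (Real.log r)) with hv
  have hs2 : (0:ℝ) < Real.sqrt 2 := Real.sqrt_pos.2 (by norm_num)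
  have hvt : Tendsto v atTop atTop := v_tendsto hγ
  have h1 : Tendsto (fun r => Hfun (v r) * Real.sqrt (Real.log (v r)) / (v r)) atTop (nhds 1) :=
    Hfun_tendsto.comp hvt
  -- log r / log v → 1
  have h2 : Tendsto (fun r => Real.log r / Real.log (v r)) atTop (nhds 1) := by
    have := (logv_div_log hγ).inv₀ one_ne_zero
    norm_num at this
    exact this
  -- sqrt(log r)/sqrt(log v) → 1
  have h3 : Tendsto (fun r => Real.sqrt (Real.log r) / Real.sqrt (Real.log (v r)))
      atTop (nhds 1) := by
    have hc : Tendsto (fun r => Real.sqrt (Real.log r / Real.log (v r))) atTop (nhds 1) := by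
      have := (Real.continuous_sqrt.continuousAt (x := (1:ℝ))).tendsto.comp h2
      simpa [Function.comp_def] using this
    apply hc.congr'
    filter_upwards [Real.tendsto_log_atTop.eventually_ge_atTop 0] with r ha
    rw [Real.sqrt_div ha]
  have hmain : Tendsto (fun r =>
      (Hfun (v r) * Real.sqrt (Real.log (v r)) / (v r)) *
        (γ * (Real.sqrt (Real.log r) / Real.sqrt (Real.log (v r))))) atTop (nhds (1 * (γ * 1))) :=
    h1.mul (h3.const_mul γ)
  norm_num at hmain
  apply hmain.congr'
  filter_upwards [eventually_gt_atTop (0:ℝ), Real.tendsto_log_atTop.eventually_gt_atTop 0,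
    (Real.tendsto_log_atTop.comp hvt).eventually_gt_atTop 0, hvt.eventually_gt_atTop 0]
    with r hr0 hlr hlv hv0
  have hslr : (0:ℝ) < Real.sqrt (Real.log r) := Real.sqrt_pos.2 hlr
  have hslv : (0:ℝ) < Real.sqrt (Real.log (v r)) := Real.sqrt_pos.2 (by exact hlv)
  have hvr : v r = γ * (Real.sqrt 2 * r * Real.sqrt (Real.log r)) := rfl
  field_simp
  rw [show γ * Real.sqrt (Real.log r) * Real.sqrt 2 * r = v r by rw [hvr]; ring, hvr]
  ring




lemma keyUB {c : ℝ} (hc : 1 < c) :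
    ∀ᶠ r : ℝ in atTop, ∀ u : ℝ, 1 ≤ u → Hfun u = Real.sqrt 2 * r →
      u / (Real.sqrt 2 * r * Real.sqrt (Real.log r)) < c := by
  have hs2 : (0:ℝ) < Real.sqrt 2 := Real.sqrt_pos.2 (by norm_num)
  set γ : ℝ := (1 + c)/2 with hγ
  have hγ1 : 1 < γ := by rw [hγ]; linarith
  have hγc : γ < c := by rw [hγ]; linarith
  have hγ0 : 0 < γ := by linarith
  filter_upwards [(v_tendsto hγ0).eventually_ge_atTop 1,
    eventually_ge_atTop (Real.exp 1),
    (HfunD hγ0).eventually (eventually_gt_nhds hγ1)] with r hv1 hr hD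
  intro u hu hH
  have he1 : (1:ℝ) < Real.exp 1 := by have := Real.exp_one_gt_d9; linarith
  have hr1 : 1 < r := lt_of_lt_of_le he1 hr
  have hr0 : (0:ℝ) < r := by linarith
  have hlr : (1:ℝ) ≤ Real.log r := by rw [Real.le_log_iff_exp_le hr0]; simpa using hr
  have hden : (0:ℝ) < Real.sqrt 2 * r * Real.sqrt (Real.log r) := by
    have : (0:ℝ) < Real.sqrt (Real.log r) := Real.sqrt_pos.2 (by linarith)
    positivity
  have hHv : Real.sqrt 2 * r < Hfun (γ * (Real.sqrt 2 * r * Real.sqrt (Real.log r))) :=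
    (one_lt_div (by positivity)).1 hD
  have huv : u < γ * (Real.sqrt 2 * r * Real.sqrt (Real.log r)) := by
    by_contra h
    push_neg at h
    rcases eq_or_lt_of_le h with h' | h'
    · rw [h', hH] at hHv; exact lt_irrefl _ hHv
    · have := Hfun_strictMono hv1 h'
      rw [hH] at this; linarith
  have : u / (Real.sqrt 2 * r * Real.sqrt (Real.log r)) <
      γ * (Real.sqrt 2 * r * Real.sqrt (Real.log r)) / (Real.sqrt 2 * r * Real.sqrt (Real.log r)) := by
    gcongr
  rw [mul_div_assoc, div_self (ne_of_gt hden), mul_one] at this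
  linarith

lemma keyLB {c : ℝ} (hc : c < 1) :
    ∀ᶠ r : ℝ in atTop, ∀ u : ℝ, 1 ≤ u → Hfun u = Real.sqrt 2 * r →
      c < u / (Real.sqrt 2 * r * Real.sqrt (Real.log r)) := by
  have hs2 : (0:ℝ) < Real.sqrt 2 := Real.sqrt_pos.2 (by norm_num)
  set γ : ℝ := max ((1 + c)/2) (1/2) with hγ
  have hγ1 : γ < 1 := by rw [hγ]; apply max_lt (by linarith) (by norm_num)
  have hγc : c < γ := by
    rcases le_or_gt c 0 with h | h
    · have : (1:ℝ)/2 ≤ γ := le_max_right _ _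
      linarith
    · have : (1 + c)/2 ≤ γ := le_max_left _ _
      linarith
  have hγ0 : 0 < γ := lt_of_lt_of_le (by norm_num) (le_max_right _ _)
  filter_upwards [(v_tendsto hγ0).eventually_ge_atTop 1,
    eventually_ge_atTop (Real.exp 1),
    (HfunD hγ0).eventually (eventually_lt_nhds hγ1)] with r hv1 hr hD
  intro u hu hH
  have he1 : (1:ℝ) < Real.exp 1 := by have := Real.exp_one_gt_d9; linarith
  have hr1 : 1 < r := lt_of_lt_of_le he1 hr
  have hr0 : (0:ℝ) < r := by linarith
  have hlr : (1:ℝ) ≤ Real.log r := by rw [Real.le_log_iff_exp_le hr0]; simpa using hr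
  have hden : (0:ℝ) < Real.sqrt 2 * r * Real.sqrt (Real.log r) := by
    have : (0:ℝ) < Real.sqrt (Real.log r) := Real.sqrt_pos.2 (by linarith)
    positivity
  have hHv : Hfun (γ * (Real.sqrt 2 * r * Real.sqrt (Real.log r))) < Real.sqrt 2 * r :=
    (div_lt_one (by positivity)).1 hD
  have huv : γ * (Real.sqrt 2 * r * Real.sqrt (Real.log r)) < u := by
    by_contra h
    push_neg at h
    rcases eq_or_lt_of_le h with h' | h'
    · rw [← h', hH] at hHv; exact lt_irrefl _ hHv
    · have := Hfun_strictMono hu h'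
      rw [hH] at this; linarith
  have : γ * (Real.sqrt 2 * r * Real.sqrt (Real.log r)) / (Real.sqrt 2 * r * Real.sqrt (Real.log r))
      < u / (Real.sqrt 2 * r * Real.sqrt (Real.log r)) := by
    gcongr
  rw [mul_div_assoc, div_self (ne_of_gt hden), mul_one] at this
  linarith

theorem growth_of_entire_ODE_solution (f : ℝ → ℝ)
    (hf : ∀ s : ℝ, f s ∈ Ici 1 ∧ Hfun (f s) = Real.sqrt 2 * |s|) :
    Tendsto (fun s : ℝ => f s / (Real.sqrt 2 * |s| * Real.sqrt (Real.log |s|)))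
      (atBot ⊔ atTop) (nhds 1) := by
  have key : ∀ l : Filter ℝ, (∀ R : ℝ, ∀ᶠ s : ℝ in l, R ≤ |s|) →
      Tendsto (fun s : ℝ => f s / (Real.sqrt 2 * |s| * Real.sqrt (Real.log |s|))) l (nhds 1) := by
    intro l hl
    rw [tendsto_order]
    constructor
    · intro c hc
      obtain ⟨R, hR⟩ := eventually_atTop.1 (keyLB hc)
      filter_upwards [hl R] with s hs
      exact hR |s| hs (f s) (hf s).1 (hf s).2
    · intro c hc
      obtain ⟨R, hR⟩ := eventually_atTop.1 (keyUB hc)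
      filter_upwards [hl R] with s hs
      exact hR |s| hs (f s) (hf s).1 (hf s).2
  rw [tendsto_sup]
  constructor
  · apply key
    intro R
    filter_upwards [eventually_le_atBot (min (-R) 0)] with s hs
    have h1 : s ≤ 0 := le_trans hs (min_le_right _ _)
    have h2 : s ≤ -R := le_trans hs (min_le_left _ _)
    rw [abs_of_nonpos h1]; linarith
  · apply key
    intro R
    filter_upwards [eventually_ge_atTop (max R 0)] with s hs
    have h1 : 0 ≤ s := le_trans (le_max_right _ _) hs
    have h2 : R ≤ s := le_trans (le_max_left _ _) hs
    rw [abs_of_nonneg h1]; linarith
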